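/- Let W ∈ R^{k×d} with k < d, and let z be a random vector with positive definite covariance Σ whose largest eigenvalue (of Σ^{1/2}) is λ_max. For a fixed linear function f(z) = wᵀz + b, the minimum over (w̃, b̃) of E_z[(f(z) − w̃ᵀWz − b̃)²] is at most λ_max² times the squared distance from Qᵀw to the column space of R, where Wᵀ = QR is a QR factorization with Q orthogonal. -/

import Mathlib

open MeasureTheory Matrix

theorem quad_bound_aux {d : ℕ} (S : Matrix (Fin d) (Fin d) ℝ) (hS : S.PosDef) (lam : ℝ)
    (hub : ∀ t ∈ spectrum ℝ S, t ≤ lam) (v : Fin d → ℝ) :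
    v ⬝ᵥ (S * S) *ᵥ v ≤ lam ^ 2 * (v ⬝ᵥ v) := by
  have hH : S.IsHermitian := hS.1
  set U : Matrix (Fin d) (Fin d) ℝ := (hH.eigenvectorUnitary : Matrix (Fin d) (Fin d) ℝ) with hUdef
  set e : Fin d → ℝ := hH.eigenvalues with he
  have hst : star U = Uᵀ := by
    rw [Matrix.star_eq_conjTranspose, Matrix.conjTranspose_eq_transpose_of_trivial]
  have hUU1 : Uᵀ * U = 1 := by
    rw [← hst]; exact hH.eigenvectorUnitary.2.1
  have hUU2 : U * Uᵀ = 1 := by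
    rw [← hst]; exact hH.eigenvectorUnitary.2.2
  have hspec : S = U * diagonal e * Uᵀ := by
    rw [← hst, he, hUdef]
    simpa [RCLike.ofReal_real_eq_id, Function.id_comp] using hH.spectral_theorem
  have hpos : ∀ i, 0 < e i := fun i => hS.eigenvalues_pos i
  have hle : ∀ i, e i ≤ lam := fun i => hub _ (hH.eigenvalues_mem_spectrum_real i)
  clear_value U e
  have hSS' : S * S = U * diagonal (fun i => e i ^ 2) * Uᵀ := by
    rw [hspec]
    have hd : diagonal e * diagonal e = diagonal (fun i => e i ^ 2) := by
      rw [Matrix.diagonal_mul_diagonal]; congr 1; ext i; ring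
    calc (U * diagonal e * Uᵀ) * (U * diagonal e * Uᵀ)
        = U * diagonal e * (Uᵀ * U) * diagonal e * Uᵀ := by
          simp only [Matrix.mul_assoc]
      _ = U * (diagonal e * diagonal e) * Uᵀ := by
          rw [hUU1]; simp only [Matrix.mul_assoc, Matrix.one_mul]
      _ = U * diagonal (fun i => e i ^ 2) * Uᵀ := by rw [hd]
  set u : Fin d → ℝ := Uᵀ *ᵥ v with hu
  have hlhs : v ⬝ᵥ (S * S) *ᵥ v = ∑ i, e i ^ 2 * u i ^ 2 := by
    rw [hSS', ← Matrix.mulVec_mulVec, ← Matrix.mulVec_mulVec, Matrix.dotProduct_mulVec,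
      ← Matrix.mulVec_transpose]
    simp only [← hu, Matrix.mulVec_diagonal, dotProduct]
    exact Finset.sum_congr rfl fun i _ => by ring
  have hvv : v ⬝ᵥ v = ∑ i, u i ^ 2 := by
    have h1 : u ⬝ᵥ u = v ⬝ᵥ v := by
      rw [hu, Matrix.dotProduct_mulVec, Matrix.vecMul_transpose,
        Matrix.mulVec_mulVec, hUU2, Matrix.one_mulVec]
    rw [← h1]; simp [dotProduct, sq]
  rw [hlhs, hvv, Finset.mul_sum]
  apply Finset.sum_le_sum
  intro i _
  have : e i ^ 2 ≤ lam ^ 2 := pow_le_pow_left₀ (hpos i).le (hle i) 2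
  exact mul_le_mul_of_nonneg_right this (sq_nonneg _)

theorem integral_sq_sum_aux {d : ℕ} {α : Type*} {mα : MeasurableSpace α} (μ : Measure α)
    (g : Fin d → α → ℝ) (hg : ∀ i, MemLp (g i) 2 μ) (v : Fin d → ℝ) :
    ∫ z, (∑ i, v i * g i z) ^ 2 ∂μ
      = ∑ i, ∑ j, v i * v j * ∫ z, g i z * g j z ∂μ := by
  have hint : ∀ i j, Integrable (fun z => g i z * g j z) μ := by
    intro i j
    have h := ((hg j).smul (hg i) (r := 1))
    rw [memLp_one_iff_integrable] at h
    exact h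
  have hstep : ∀ z : α, (∑ i, v i * g i z) ^ 2
      = ∑ i, ∑ j, v i * v j * (g i z * g j z) := by
    intro z
    rw [sq, Finset.sum_mul_sum]
    exact Finset.sum_congr rfl fun i _ => Finset.sum_congr rfl fun j _ => by ring
  calc ∫ z, (∑ i, v i * g i z) ^ 2 ∂μ
      = ∫ z, ∑ i, ∑ j, v i * v j * (g i z * g j z) ∂μ :=
        integral_congr_ae (Filter.Eventually.of_forall fun z => hstep z)
    _ = ∑ i, ∑ j, v i * v j * ∫ z, g i z * g j z ∂μ := by
        rw [integral_finset_sum]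
        · refine Finset.sum_congr rfl fun i _ => ?_
          rw [integral_finset_sum]
          · exact Finset.sum_congr rfl fun j _ => integral_const_mul _ _
          · exact fun j _ => (hint i j).const_mul _
        · exact fun i _ => integrable_finset_sum _ fun j _ => (hint i j).const_mul _

/-- For `W ∈ ℝ^{k×d}` with `k < d` and `z` a random vector with positive definite covariance `Σ`
whose square root `S` has largest eigenvalue `lammax`, the minimal expected squared error of
approximating `f(z) = wᵀz + b` by a linear function of `W z` is at most `lammax²` times the
squared distance from `Qᵀ w` to the column space of `R`, where `Wᵀ = Q R` with `Q` orthogonal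
and `R` upper triangular. -/
theorem min_error_le_dist_bound (d k : ℕ) (hk : k < d)
    (μ : Measure (Fin d → ℝ)) [IsProbabilityMeasure μ]
    (hL2 : ∀ i : Fin d, MemLp (fun z => z i) 2 μ)
    (Sigma S : Matrix (Fin d) (Fin d) ℝ)
    (hcov : ∀ i j : Fin d,
      Sigma i j = ∫ z, (z i - ∫ y, y i ∂μ) * (z j - ∫ y, y j ∂μ) ∂μ)
    (hSigma : Sigma.PosDef) (hS : S.PosDef) (hSS : S * S = Sigma)
    (lammax : ℝ) (hmem : lammax ∈ spectrum ℝ S)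
    (hub : ∀ t ∈ spectrum ℝ S, t ≤ lammax)
    (W : Matrix (Fin k) (Fin d) ℝ)
    (Q : Matrix (Fin d) (Fin d) ℝ) (hQ : Q ∈ Matrix.orthogonalGroup (Fin d) ℝ)
    (R : Matrix (Fin d) (Fin k) ℝ)
    (htri : ∀ (i : Fin d) (j : Fin k), (j : ℕ) < (i : ℕ) → R i j = 0)
    (hQR : Wᵀ = Q * R) (w : Fin d → ℝ) (b : ℝ) :
    sInf {e : ℝ | ∃ (wt : Fin k → ℝ) (bt : ℝ),
        e = ∫ z, (w ⬝ᵥ z + b - (wt ⬝ᵥ W.mulVec z + bt)) ^ 2 ∂μ}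
      ≤ lammax ^ 2 *
        sInf {e : ℝ | ∃ x : Fin k → ℝ,
          e = ∑ i : Fin d, (R.mulVec x i - Qᵀ.mulVec w i) ^ 2} := by
  classical
  set m : Fin d → ℝ := fun i => ∫ y, y i ∂μ with hm
  set A : Set ℝ := {e : ℝ | ∃ (wt : Fin k → ℝ) (bt : ℝ),
      e = ∫ z, (w ⬝ᵥ z + b - (wt ⬝ᵥ W.mulVec z + bt)) ^ 2 ∂μ} with hA
  set B : Set ℝ := {e : ℝ | ∃ x : Fin k → ℝ,
      e = ∑ i : Fin d, (R.mulVec x i - Qᵀ.mulVec w i) ^ 2} with hB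
  have hAbdd : BddBelow A := by
    refine ⟨0, fun a ha => ?_⟩
    obtain ⟨wt, bt, rfl⟩ := ha
    exact integral_nonneg fun z => sq_nonneg _
  have hBne : B.Nonempty := ⟨_, 0, rfl⟩
  have hd0 : 0 < d := lt_of_le_of_lt (Nat.zero_le k) hk
  have hlam : 0 < lammax :=
    lt_of_lt_of_le (hS.eigenvalues_pos ⟨0, hd0⟩)
      (hub _ (hS.1.eigenvalues_mem_spectrum_real ⟨0, hd0⟩))
  -- orthogonality facts for Q
  have hstQ : star Q = Qᵀ := by
    rw [Matrix.star_eq_conjTranspose, Matrix.conjTranspose_eq_transpose_of_trivial]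
  have hQ1 : Qᵀ * Q = 1 := by
    rw [← hstQ]; exact (Matrix.mem_orthogonalGroup_iff' (Fin d) ℝ).mp hQ
  have hQ2 : Q * Qᵀ = 1 := by
    rw [← hstQ]; exact (Matrix.mem_orthogonalGroup_iff (Fin d) ℝ).mp hQ
  have key : ∀ x : Fin k → ℝ,
      sInf A ≤ lammax ^ 2 * ∑ i : Fin d, (R.mulVec x i - Qᵀ.mulVec w i) ^ 2 := by
    intro x
    set v : Fin d → ℝ := w - Wᵀ *ᵥ x with hv
    have hmemA : (∫ z, (w ⬝ᵥ z + b - (x ⬝ᵥ W.mulVec z + (b + v ⬝ᵥ m))) ^ 2 ∂μ) ∈ A :=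
      ⟨x, b + v ⬝ᵥ m, rfl⟩
    have h1 : sInf A ≤ ∫ z, (w ⬝ᵥ z + b - (x ⬝ᵥ W.mulVec z + (b + v ⬝ᵥ m))) ^ 2 ∂μ :=
      csInf_le hAbdd hmemA
    have hptw : ∀ z : Fin d → ℝ,
        w ⬝ᵥ z + b - (x ⬝ᵥ W.mulVec z + (b + v ⬝ᵥ m)) = ∑ i, v i * (z i - m i) := by
      intro z
      have hx : x ⬝ᵥ W.mulVec z = (Wᵀ *ᵥ x) ⬝ᵥ z := by
        rw [Matrix.dotProduct_mulVec, Matrix.mulVec_transpose]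
      rw [hx]
      simp only [hv, dotProduct, Pi.sub_apply, mul_sub, sub_mul, Finset.sum_sub_distrib]
      ring
    have h2 : (∫ z, (w ⬝ᵥ z + b - (x ⬝ᵥ W.mulVec z + (b + v ⬝ᵥ m))) ^ 2 ∂μ)
        = v ⬝ᵥ Sigma *ᵥ v := by
      have hgi : ∀ i : Fin d, MemLp (fun z : Fin d → ℝ => z i - m i) 2 μ :=
        fun i => (hL2 i).sub (memLp_const (m i))
      calc (∫ z, (w ⬝ᵥ z + b - (x ⬝ᵥ W.mulVec z + (b + v ⬝ᵥ m))) ^ 2 ∂μ)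
          = ∫ z, (∑ i, v i * (z i - m i)) ^ 2 ∂μ :=
            integral_congr_ae (Filter.Eventually.of_forall fun z => by dsimp only; rw [hptw z])
        _ = ∑ i, ∑ j, v i * v j * ∫ z, (z i - m i) * (z j - m j) ∂μ :=
            integral_sq_sum_aux μ (fun i z => z i - m i) hgi v
        _ = ∑ i, ∑ j, v i * v j * Sigma i j := by
            refine Finset.sum_congr rfl fun i _ => Finset.sum_congr rfl fun j _ => ?_
            rw [hcov i j]
        _ = v ⬝ᵥ Sigma *ᵥ v := by
            have hsym : ∀ i j, Sigma j i = Sigma i j := fun i j => by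
              have := hSigma.1.apply i j
              simpa using this
            simp only [dotProduct, Matrix.mulVec, dotProduct, Finset.mul_sum]
            rw [Finset.sum_comm]
            refine Finset.sum_congr rfl fun i _ => Finset.sum_congr rfl fun j _ => ?_
            rw [hsym i j]; ring
    have h3 : v ⬝ᵥ Sigma *ᵥ v ≤ lammax ^ 2 * (v ⬝ᵥ v) := by
      rw [← hSS]; exact quad_bound_aux S hS lammax hub v
    have h4 : v ⬝ᵥ v = ∑ i : Fin d, (R.mulVec x i - Qᵀ.mulVec w i) ^ 2 := by
      have hQv : Qᵀ *ᵥ v = Qᵀ *ᵥ w - R *ᵥ x := by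
        rw [hv, Matrix.mulVec_sub]
        congr 1
        rw [hQR, ← Matrix.mulVec_mulVec, Matrix.mulVec_mulVec, hQ1, Matrix.one_mulVec]
      have h5 : (Qᵀ *ᵥ v) ⬝ᵥ (Qᵀ *ᵥ v) = v ⬝ᵥ v := by
        rw [Matrix.dotProduct_mulVec, Matrix.vecMul_transpose,
          Matrix.mulVec_mulVec, hQ2, Matrix.one_mulVec]
      rw [← h5]
      simp only [dotProduct, hQv, Pi.sub_apply]
      exact Finset.sum_congr rfl fun i _ => by ring
    calc sInf A ≤ v ⬝ᵥ Sigma *ᵥ v := h2 ▸ h1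
      _ ≤ lammax ^ 2 * (v ⬝ᵥ v) := h3
      _ = lammax ^ 2 * ∑ i : Fin d, (R.mulVec x i - Qᵀ.mulVec w i) ^ 2 := by rw [h4]
  refine le_of_forall_pos_le_add fun ε hε => ?_
  obtain ⟨eB, heB, hlt⟩ := Real.lt_sInf_add_pos hBne
    (show 0 < ε / lammax ^ 2 from div_pos hε (pow_pos hlam 2))
  obtain ⟨x, rfl⟩ := heB
  calc sInf A ≤ lammax ^ 2 * ∑ i : Fin d, (R.mulVec x i - Qᵀ.mulVec w i) ^ 2 := key x
    _ ≤ lammax ^ 2 * (sInf B + ε / lammax ^ 2) :=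
        mul_le_mul_of_nonneg_left hlt.le (pow_nonneg hlam.le 2)
    _ = lammax ^ 2 * sInf B + ε := by field_simp
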